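/- Let α > -1/2 and a ≥ 1. There exists a constant C, depending only on α (in particular, independent of j), such that for every integer j ≥ 1, every ξ ∈ (0,1) and all x, y > 0 with x ≠ y one has G_{α+aj,t(ξ)}(x,y) ≤ C · (Γ(aj)/Γ(α+aj+1/2)) · exp(−(x−y)²/(8ξ)) · ((1−ξ²)/ξ)^{α+1} · |x²−y²|^{−(2α+1)} · (xy)^{−aj}. -/

import Mathlib

open MeasureTheory
open scoped ENNReal NNReal

/-- One-dimensional Laguerre heat kernel of Hermite type `G^H_{α,t}(x,y)`. -/
noncomputable def lagHeatH (α t x y : ℝ) : ℝ :=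
  (x * y) ^ (α + 1/2) * Real.sinh (2 * t) ^ (-1 - α) *
    ∫ s in (-1:ℝ)..1,
      Real.exp (-(1/2) * (Real.cosh (2 * t) / Real.sinh (2 * t)) * (x ^ 2 + y ^ 2)
          - x * y * s / Real.sinh (2 * t)) *
        ((1 - s ^ 2) ^ (α - 1/2) / (2 ^ α * Real.sqrt Real.pi * Real.Gamma (α + 1/2)))

/-- Laguerre heat kernel of convolution type `G_{α,t}(x,y) = (xy)^{−α−1/2} G^H_{α,t}(x,y)`. -/
noncomputable def lagHeatC (α t x y : ℝ) : ℝ :=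
  (x * y) ^ (-α - 1/2) * lagHeatH α t x y

/-- Meda's change of variable `t(ξ) = (1/2) log((1+ξ)/(1−ξ))`, `ξ ∈ (0,1)`. -/
noncomputable def meda (ξ : ℝ) : ℝ := (1/2) * Real.log ((1 + ξ) / (1 - ξ))


lemma sinh_two_meda {ξ : ℝ} (h0 : 0 < ξ) (h1 : ξ < 1) :
    Real.sinh (2 * meda ξ) = 2 * ξ / (1 - ξ ^ 2) := by
  have h1' : (0:ℝ) < 1 - ξ := by linarith
  have h2 : (0:ℝ) < 1 + ξ := by linarith
  have hr : (0:ℝ) < (1 + ξ) / (1 - ξ) := div_pos h2 h1'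
  have hm : 2 * meda ξ = Real.log ((1 + ξ) / (1 - ξ)) := by unfold meda; ring
  have hw : (0:ℝ) < 1 - ξ ^ 2 := by nlinarith
  rw [hm, Real.sinh_eq, Real.exp_log hr, Real.exp_neg, Real.exp_log hr]
  field_simp
  ring

lemma cosh_two_meda {ξ : ℝ} (h0 : 0 < ξ) (h1 : ξ < 1) :
    Real.cosh (2 * meda ξ) = (1 + ξ ^ 2) / (1 - ξ ^ 2) := by
  have h1' : (0:ℝ) < 1 - ξ := by linarith
  have h2 : (0:ℝ) < 1 + ξ := by linarith
  have hr : (0:ℝ) < (1 + ξ) / (1 - ξ) := div_pos h2 h1'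
  have hm : 2 * meda ξ = Real.log ((1 + ξ) / (1 - ξ)) := by unfold meda; ring
  have hw : (0:ℝ) < 1 - ξ ^ 2 := by nlinarith
  rw [hm, Real.cosh_eq, Real.exp_log hr, Real.exp_neg, Real.exp_log hr]
  field_simp
  ring

lemma exp_neg_le_aux {p u : ℝ} (hp : 0 < p) (hu : 0 < u) :
    Real.exp (-u) ≤ p ^ p * Real.exp (-p) * u ^ (-p) := by
  have h1 : u ≤ p * Real.exp (u / p - 1) := by
    have h := Real.add_one_le_exp (u / p - 1)
    have h' : u / p ≤ Real.exp (u / p - 1) := by linarith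
    calc u = p * (u / p) := by field_simp
    _ ≤ p * Real.exp (u / p - 1) := by
        exact mul_le_mul_of_nonneg_left h' hp.le
  have h2 : u ^ p ≤ p ^ p * Real.exp (u - p) := by
    calc u ^ p ≤ (p * Real.exp (u / p - 1)) ^ p :=
          Real.rpow_le_rpow hu.le h1 hp.le
    _ = p ^ p * (Real.exp (u / p - 1)) ^ p :=
          Real.mul_rpow hp.le (Real.exp_nonneg _)
    _ = p ^ p * Real.exp (u - p) := by
        rw [Real.rpow_def_of_pos (Real.exp_pos _), Real.log_exp]
        congr 1
        field_simp
  have hup : 0 < u ^ p := Real.rpow_pos_of_pos hu p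
  rw [Real.rpow_neg hu.le, ← div_eq_mul_inv, le_div_iff₀ hup]
  calc Real.exp (-u) * u ^ p ≤ Real.exp (-u) * (p ^ p * Real.exp (u - p)) :=
        mul_le_mul_of_nonneg_left h2 (Real.exp_nonneg _)
  _ = p ^ p * Real.exp (-p) := by
      rw [mul_comm, mul_assoc, ← Real.exp_add]
      congr 2
      ring

lemma cont_rpow_const {c : ℝ} (hc : 0 ≤ c) : Continuous fun z : ℝ => z ^ c :=
  continuous_iff_continuousAt.mpr fun x =>
    Real.continuousAt_rpow_const x c (Or.inr hc)

lemma int_gamma_aux {T c : ℝ} (hT : 0 < T) (hc : 0 ≤ c) :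
    (∫ s in (-1:ℝ)..1, Real.exp (-(T * (1 + s))) * (1 + s) ^ c) ≤
      Real.Gamma (c + 1) * T ^ (-(c + 1)) := by
  have hc1 : (0:ℝ) < c + 1 := by linarith
  have h2 : (∫ s in (-1:ℝ)..1, Real.exp (-(T * (1 + s))) * (1 + s) ^ c)
      = ∫ u in (0:ℝ)..2, Real.exp (-(T * u)) * u ^ c := by
    have := intervalIntegral.integral_comp_add_left
      (a := (-1:ℝ)) (b := 1) (fun u => Real.exp (-(T * u)) * u ^ c) 1
    norm_num at this
    exact this
  rw [h2, intervalIntegral.integral_of_le (by norm_num : (0:ℝ) ≤ 2)]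
  have hTc : (0:ℝ) < T ^ c := Real.rpow_pos_of_pos hT c
  have hint : IntegrableOn (fun u : ℝ => Real.exp (-(T * u)) * u ^ c) (Set.Ioi 0) := by
    have h0 : IntegrableOn (fun x : ℝ => Real.exp (-x) * x ^ c) (Set.Ioi 0) := by
      simpa [add_sub_cancel_right] using
        Real.GammaIntegral_convergent hc1
    have h1 : IntegrableOn (fun x : ℝ => Real.exp (-(T * x)) * (T * x) ^ c) (Set.Ioi 0) := by
      have := (integrableOn_Ioi_comp_mul_left_iff
        (fun x : ℝ => Real.exp (-x) * x ^ c) 0 hT).mpr (by simpa [mul_zero] using h0)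
      simpa using this
    have h2 : IntegrableOn
        (fun x : ℝ => (T ^ c)⁻¹ * (Real.exp (-(T * x)) * (T * x) ^ c)) (Set.Ioi 0) :=
      h1.const_mul _
    refine h2.congr_fun (fun x hx => ?_) measurableSet_Ioi
    have hx0 : (0:ℝ) < x := hx
    beta_reduce
    rw [Real.mul_rpow hT.le hx0.le]
    field_simp
  have hmono : (∫ u in Set.Ioc (0:ℝ) 2, Real.exp (-(T * u)) * u ^ c) ≤
      ∫ u in Set.Ioi (0:ℝ), Real.exp (-(T * u)) * u ^ c := by
    refine setIntegral_mono_set hint ?_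
      (HasSubset.Subset.eventuallyLE Set.Ioc_subset_Ioi_self)
    refine (ae_restrict_iff' measurableSet_Ioi).mpr (Filter.Eventually.of_forall fun u hu => ?_)
    have hu0 : (0:ℝ) < u := hu
    positivity
  refine hmono.trans_eq ?_
  have heq := Real.integral_rpow_mul_exp_neg_mul_Ioi hc1 hT
  simp only [add_sub_cancel_right] at heq
  calc (∫ u in Set.Ioi (0:ℝ), Real.exp (-(T * u)) * u ^ c)
      = ∫ u in Set.Ioi (0:ℝ), u ^ c * Real.exp (-(T * u)) := by
        refine setIntegral_congr_fun measurableSet_Ioi fun u _ => ?_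
        ring
  _ = (1 / T) ^ (c + 1) * Real.Gamma (c + 1) := heq
  _ = Real.Gamma (c + 1) * T ^ (-(c + 1)) := by
      rw [one_div, Real.inv_rpow hT.le, ← Real.rpow_neg hT.le]
      ring

private lemma helper_mul {A B : ℝ} (S I : ℝ) (h : A * B = 1) : A * (B * S * I) = S * I := by
  calc A * (B * S * I) = (A * B) * (S * I) := by ring
  _ = S * I := by rw [h, one_mul]

lemma lagC_eq (β t x y : ℝ) (hxy : 0 < x * y) :
    lagHeatC β t x y = Real.sinh (2 * t) ^ (-1 - β) *
      ∫ s in (-1:ℝ)..1,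
        Real.exp (-(1/2) * (Real.cosh (2 * t) / Real.sinh (2 * t)) * (x ^ 2 + y ^ 2)
            - x * y * s / Real.sinh (2 * t)) *
          ((1 - s ^ 2) ^ (β - 1/2) / (2 ^ β * Real.sqrt Real.pi * Real.Gamma (β + 1/2))) := by
  unfold lagHeatC lagHeatH
  have hone : (x * y) ^ (-β - 1/2) * (x * y) ^ (β + 1/2) = 1 := by
    rw [← Real.rpow_add hxy]; norm_num
  exact helper_mul _ _ hone

set_option maxHeartbeats 1000000 in
/-- for `α > −1/2`, `a ≥ 1` there is `C = C(α)` (independent of `j`) with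
`G_{α+aj,t(ξ)}(x,y) ≤ C (Γ(aj)/Γ(α+aj+1/2)) exp(−(x−y)²/(8ξ)) ((1−ξ²)/ξ)^{α+1}
|x²−y²|^{−(2α+1)} (xy)^{−aj}` for all `j ≥ 1`, `ξ ∈ (0,1)` and `x, y > 0` with `x ≠ y`. -/
theorem stmt17 (α a : ℝ) (hα : -(1/2) < α) (ha : 1 ≤ a) :
    ∃ C : ℝ, 0 < C ∧ ∀ j : ℕ, 1 ≤ j → ∀ ξ ∈ Set.Ioo (0:ℝ) 1, ∀ x y : ℝ,
      0 < x → 0 < y → x ≠ y →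
      lagHeatC (α + a * (j:ℝ)) (meda ξ) x y ≤
        C * (Real.Gamma (a * (j:ℝ)) / Real.Gamma (α + a * (j:ℝ) + 1/2)) *
          Real.exp (-(x - y) ^ 2 / (8 * ξ)) * ((1 - ξ ^ 2) / ξ) ^ (α + 1) *
          |x ^ 2 - y ^ 2| ^ (-(2 * α + 1)) * (x * y) ^ (-(a * (j:ℝ))) := by
  have hp : (0:ℝ) < α + 1/2 := by linarith
  have hD0 : (0:ℝ) < (α + 1/2) ^ (α + 1/2) * Real.exp (-(α + 1/2)) :=
    mul_pos (Real.rpow_pos_of_pos hp _) (Real.exp_pos _)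
  have hsπ : (0:ℝ) < Real.sqrt Real.pi := Real.sqrt_pos.mpr Real.pi_pos
  refine ⟨((α + 1/2) ^ (α + 1/2) * Real.exp (-(α + 1/2))) ^ 2 * 32 ^ (α + 1/2) /
      (2 * Real.sqrt Real.pi), ?_, ?_⟩
  · exact div_pos (mul_pos (pow_pos hD0 2) (Real.rpow_pos_of_pos (by norm_num) _))
      (by positivity)
  intro j hj ξ hξ x y hx hy hxy
  obtain ⟨hξ0, hξ1⟩ := hξ
  have hw : (0:ℝ) < 1 - ξ ^ 2 := by nlinarith
  have hj1 : (1:ℝ) ≤ (j:ℝ) := by exact_mod_cast hj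
  have haj : (1:ℝ) ≤ a * (j:ℝ) := by nlinarith
  have hajpos : (0:ℝ) < a * (j:ℝ) := by linarith
  have hc : (0:ℝ) ≤ a * (j:ℝ) - 1 := by linarith
  have hxy0 : (0:ℝ) < x * y := mul_pos hx hy
  set D : ℝ := (α + 1/2) ^ (α + 1/2) * Real.exp (-(α + 1/2)) with hD
  set β : ℝ := α + a * (j:ℝ) with hβ
  have hβh : (0:ℝ) < β + 1/2 := by rw [hβ]; linarith
  have hβm : (0:ℝ) < β - 1/2 := by rw [hβ]; linarith
  have hΓβ : (0:ℝ) < Real.Gamma (β + 1/2) := Real.Gamma_pos_of_pos hβh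
  have hΓa : (0:ℝ) < Real.Gamma (a * (j:ℝ)) := Real.Gamma_pos_of_pos hajpos
  set sh : ℝ := 2 * ξ / (1 - ξ ^ 2) with hshdef
  have hsh : (0:ℝ) < sh := by rw [hshdef]; positivity
  set T : ℝ := x * y / sh with hTdef
  have hT0 : (0:ℝ) < T := by rw [hTdef]; positivity
  set u1 : ℝ := (x - y) ^ 2 / (8 * ξ) with hu1def
  have hxy' : x - y ≠ 0 := sub_ne_zero.mpr hxy
  have hu10 : (0:ℝ) < u1 := by
    rw [hu1def]; positivity
  set u2 : ℝ := ξ * (x + y) ^ 2 / 4 with hu2def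
  have hu20 : (0:ℝ) < u2 := by rw [hu2def]; positivity
  have hsh2 : Real.sinh (2 * meda ξ) = sh := by rw [hshdef]; exact sinh_two_meda hξ0 hξ1
  have hch2 : Real.cosh (2 * meda ξ) = (1 + ξ ^ 2) / (1 - ξ ^ 2) := cosh_two_meda hξ0 hξ1
  rw [lagC_eq β (meda ξ) x y hxy0]
  simp only [hsh2, hch2]
  set NN : ℝ := 2 ^ β * Real.sqrt Real.pi * Real.Gamma (β + 1/2) with hNN
  have hNN0 : (0:ℝ) < NN := by
    rw [hNN]; exact mul_pos (mul_pos (Real.rpow_pos_of_pos two_pos _) hsπ) hΓβ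
  -- pointwise bound and integral monotonicity
  have hcont1 : Continuous fun s : ℝ => (1 - s ^ 2) ^ (β - 1/2) :=
    (cont_rpow_const hβm.le).comp (continuous_const.sub (continuous_pow 2))
  have hcont2 : Continuous fun s : ℝ => (1 + s) ^ (a * (j:ℝ) - 1) :=
    (cont_rpow_const hc).comp (continuous_const.add continuous_id)
  have hfint : IntervalIntegrable (fun s : ℝ =>
      Real.exp (-(1/2) * ((1 + ξ ^ 2) / (1 - ξ ^ 2) / sh) * (x ^ 2 + y ^ 2)
        - x * y * s / sh) * ((1 - s ^ 2) ^ (β - 1/2) / NN)) MeasureTheory.volume (-1) 1 := by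
    exact ((Real.continuous_exp.comp (continuous_const.sub
      ((continuous_const.mul continuous_id).div_const _))).mul
      (hcont1.div_const _)).intervalIntegrable _ _
  have hgint : IntervalIntegrable (fun s : ℝ =>
      Real.exp (-(2 * u1 + u2)) * (2 ^ (α + 1/2) * 2 ^ (β - 1/2) / NN) *
        (Real.exp (-(T * (1 + s))) * (1 + s) ^ (a * (j:ℝ) - 1))) MeasureTheory.volume (-1) 1 := by
    exact (continuous_const.mul ((Real.continuous_exp.comp
      ((continuous_const.mul (continuous_const.add continuous_id)).neg)).mul
      hcont2)).intervalIntegrable _ _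
  have hfg : ∀ s ∈ Set.Icc (-1:ℝ) 1,
      Real.exp (-(1/2) * ((1 + ξ ^ 2) / (1 - ξ ^ 2) / sh) * (x ^ 2 + y ^ 2)
        - x * y * s / sh) * ((1 - s ^ 2) ^ (β - 1/2) / NN) ≤
      Real.exp (-(2 * u1 + u2)) * (2 ^ (α + 1/2) * 2 ^ (β - 1/2) / NN) *
        (Real.exp (-(T * (1 + s))) * (1 + s) ^ (a * (j:ℝ) - 1)) := by
    intro s hs
    obtain ⟨hs1, hs2⟩ := hs
    have h1s : (0:ℝ) ≤ 1 + s := by linarith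
    have h2s : (0:ℝ) ≤ 1 - s := by linarith
    have h3s : (1:ℝ) + s ≤ 2 := by linarith
    have h4s : (1:ℝ) - s ≤ 2 := by linarith
    have hexp : -(1/2) * ((1 + ξ ^ 2) / (1 - ξ ^ 2) / sh) * (x ^ 2 + y ^ 2) - x * y * s / sh
        = -(2 * u1 + u2) + -(T * (1 + s)) := by
      rw [hu1def, hu2def, hTdef, hshdef]
      field_simp
      ring
    rw [hexp, Real.exp_add]
    have hA : (1 - s ^ 2) ^ (β - 1/2) ≤
        2 ^ (α + 1/2) * 2 ^ (β - 1/2) * (1 + s) ^ (a * (j:ℝ) - 1) := by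
      have e1 : (1:ℝ) - s ^ 2 = (1 + s) * (1 - s) := by ring
      rw [e1, Real.mul_rpow h1s h2s]
      have e2 : (1 + s) ^ (β - 1/2) = (1 + s) ^ (α + 1/2) * (1 + s) ^ (a * (j:ℝ) - 1) := by
        rw [show β - 1/2 = (α + 1/2) + (a * (j:ℝ) - 1) from by rw [hβ]; ring,
          Real.rpow_add' h1s (by intro h; nlinarith)]
      rw [e2]
      have b1 : (1 + s) ^ (α + 1/2) ≤ (2:ℝ) ^ (α + 1/2) := Real.rpow_le_rpow h1s h3s hp.le
      have b2 : (1 - s) ^ (β - 1/2) ≤ (2:ℝ) ^ (β - 1/2) := Real.rpow_le_rpow h2s h4s hβm.le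
      have b3 : (0:ℝ) ≤ (1 + s) ^ (a * (j:ℝ) - 1) := Real.rpow_nonneg h1s _
      calc (1 + s) ^ (α + 1/2) * (1 + s) ^ (a * (j:ℝ) - 1) * (1 - s) ^ (β - 1/2)
          ≤ (2:ℝ) ^ (α + 1/2) * (1 + s) ^ (a * (j:ℝ) - 1) * (2:ℝ) ^ (β - 1/2) := by
            exact mul_le_mul (mul_le_mul b1 le_rfl b3 (by positivity)) b2
              (Real.rpow_nonneg h2s _) (by positivity)
      _ = 2 ^ (α + 1/2) * 2 ^ (β - 1/2) * (1 + s) ^ (a * (j:ℝ) - 1) := by ring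
    calc Real.exp (-(2 * u1 + u2)) * Real.exp (-(T * (1 + s))) *
          ((1 - s ^ 2) ^ (β - 1/2) / NN)
        ≤ Real.exp (-(2 * u1 + u2)) * Real.exp (-(T * (1 + s))) *
          ((2 ^ (α + 1/2) * 2 ^ (β - 1/2) * (1 + s) ^ (a * (j:ℝ) - 1)) / NN) := by
          refine mul_le_mul_of_nonneg_left ?_ (by positivity)
          rw [div_eq_mul_inv, div_eq_mul_inv]
          exact mul_le_mul_of_nonneg_right hA (inv_nonneg.mpr hNN0.le)
    _ = Real.exp (-(2 * u1 + u2)) * (2 ^ (α + 1/2) * 2 ^ (β - 1/2) / NN) *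
          (Real.exp (-(T * (1 + s))) * (1 + s) ^ (a * (j:ℝ) - 1)) := by ring
  have hIb := intervalIntegral.integral_mono_on (by norm_num : (-1:ℝ) ≤ 1) hfint hgint hfg
  have hK0 : (0:ℝ) ≤ Real.exp (-(2 * u1 + u2)) * (2 ^ (α + 1/2) * 2 ^ (β - 1/2) / NN) :=
    mul_nonneg (Real.exp_nonneg _) (div_nonneg (mul_nonneg (Real.rpow_nonneg (by norm_num) _)
      (Real.rpow_nonneg (by norm_num) _)) hNN0.le)
  have hgInt : (∫ s in (-1:ℝ)..1,
      Real.exp (-(2 * u1 + u2)) * (2 ^ (α + 1/2) * 2 ^ (β - 1/2) / NN) *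
        (Real.exp (-(T * (1 + s))) * (1 + s) ^ (a * (j:ℝ) - 1))) ≤
      Real.exp (-(2 * u1 + u2)) * (2 ^ (α + 1/2) * 2 ^ (β - 1/2) / NN) *
        (Real.Gamma (a * (j:ℝ)) * T ^ (-(a * (j:ℝ)))) := by
    rw [intervalIntegral.integral_const_mul]
    refine mul_le_mul_of_nonneg_left ?_ hK0
    have H := int_gamma_aux hT0 hc
    rw [show a * (j:ℝ) - 1 + 1 = a * (j:ℝ) from by ring] at H
    exact H
  -- exponential splitting
  have hE1 : Real.exp (-u1) ≤ D * u1 ^ (-(α + 1/2)) := by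
    rw [hD]; exact exp_neg_le_aux hp hu10
  have hE2 : Real.exp (-u2) ≤ D * u2 ^ (-(α + 1/2)) := by
    rw [hD]; exact exp_neg_le_aux hp hu20
  have hDpos : (0:ℝ) < D := by rw [hD]; exact hD0
  have hEE : Real.exp (-(2 * u1 + u2)) ≤
      Real.exp (-u1) * (D * u1 ^ (-(α + 1/2)) * (D * u2 ^ (-(α + 1/2)))) := by
    have hsplit : Real.exp (-(2 * u1 + u2)) =
        Real.exp (-u1) * (Real.exp (-u1) * Real.exp (-u2)) := by
      rw [← Real.exp_add, ← Real.exp_add]; congr 1; ring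
    rw [hsplit]
    refine mul_le_mul_of_nonneg_left ?_ (Real.exp_nonneg _)
    exact mul_le_mul hE1 hE2 (Real.exp_nonneg _)
      (mul_nonneg hDpos.le (Real.rpow_nonneg hu10.le _))
  have hK2dN0 : (0:ℝ) ≤ 2 ^ (α + 1/2) * 2 ^ (β - 1/2) / NN :=
    div_nonneg (mul_nonneg (Real.rpow_nonneg (by norm_num) _)
      (Real.rpow_nonneg (by norm_num) _)) hNN0.le
  have hEEK : Real.exp (-(2 * u1 + u2)) * (2 ^ (α + 1/2) * 2 ^ (β - 1/2) / NN) ≤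
      (Real.exp (-u1) * (D * u1 ^ (-(α + 1/2)) * (D * u2 ^ (-(α + 1/2))))) *
        (2 ^ (α + 1/2) * 2 ^ (β - 1/2) / NN) :=
    mul_le_mul_of_nonneg_right hEE hK2dN0
  -- identities
  have idA : u1 ^ (-(α + 1/2)) * u2 ^ (-(α + 1/2)) =
      32 ^ (α + 1/2) * |x ^ 2 - y ^ 2| ^ (-(2 * α + 1)) := by
    have hu12 : u1 * u2 = (x ^ 2 - y ^ 2) ^ 2 / 32 := by
      rw [hu1def, hu2def]; field_simp; ring
    rw [← Real.mul_rpow hu10.le hu20.le, hu12, div_eq_mul_inv,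
      Real.mul_rpow (sq_nonneg _) (by norm_num : (0:ℝ) ≤ (32:ℝ)⁻¹),
      Real.inv_rpow (by norm_num : (0:ℝ) ≤ (32:ℝ)), ← Real.rpow_neg (by norm_num), neg_neg,
      ← sq_abs (x ^ 2 - y ^ 2), ← Real.rpow_natCast |x ^ 2 - y ^ 2| 2,
      ← Real.rpow_mul (abs_nonneg _),
      show ((2:ℕ):ℝ) * (-(α + 1/2)) = -(2 * α + 1) from by push_cast; ring]
    ring
  have idB : sh ^ (-1 - β) * T ^ (-(a * (j:ℝ))) =
      2 ^ (-(α + 1)) * ((1 - ξ ^ 2) / ξ) ^ (α + 1) * (x * y) ^ (-(a * (j:ℝ))) := by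
    have h1 : T ^ (-(a * (j:ℝ))) = (x * y) ^ (-(a * (j:ℝ))) * sh ^ (a * (j:ℝ)) := by
      rw [hTdef, Real.div_rpow hxy0.le hsh.le, Real.rpow_neg hsh.le, div_inv_eq_mul]
    have h2 : sh ^ (-1 - β) * sh ^ (a * (j:ℝ)) = sh ^ (-(α + 1)) := by
      rw [← Real.rpow_add hsh]; congr 1; rw [hβ]; ring
    have h3 : sh ^ (-(α + 1)) = 2 ^ (-(α + 1)) * ((1 - ξ ^ 2) / ξ) ^ (α + 1) := by
      rw [hshdef, Real.rpow_neg (by positivity),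
        show 2 * ξ / (1 - ξ ^ 2) = ((1 - ξ ^ 2) / ξ * (2:ℝ)⁻¹)⁻¹ from by
          rw [mul_inv, inv_inv, inv_div]; field_simp,
        Real.inv_rpow (by positivity), inv_inv,
        Real.mul_rpow (by positivity) (by norm_num),
        Real.inv_rpow (by norm_num : (0:ℝ) ≤ 2), ← Real.rpow_neg (by norm_num)]
      ring
    calc sh ^ (-1 - β) * T ^ (-(a * (j:ℝ)))
        = (sh ^ (-1 - β) * sh ^ (a * (j:ℝ))) * (x * y) ^ (-(a * (j:ℝ))) := by rw [h1]; ring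
    _ = 2 ^ (-(α + 1)) * ((1 - ξ ^ 2) / ξ) ^ (α + 1) * (x * y) ^ (-(a * (j:ℝ))) := by
        rw [h2, h3]
  have idC : (2:ℝ) ^ (α + 1/2) * 2 ^ (β - 1/2) * 2 ^ (-(α + 1)) = 2 ^ β * (2:ℝ)⁻¹ := by
    rw [← Real.rpow_add two_pos, ← Real.rpow_add two_pos,
      show α + 1/2 + (β - 1/2) + -(α + 1) = β + (-1) from by ring,
      Real.rpow_add two_pos, Real.rpow_neg_one]
  have hexp1 : Real.exp (-u1) = Real.exp (-(x - y) ^ 2 / (8 * ξ)) := by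
    rw [hu1def]; congr 1; ring
  -- final equality
  have hfinal : sh ^ (-1 - β) *
      ((Real.exp (-u1) * (D * u1 ^ (-(α + 1/2)) * (D * u2 ^ (-(α + 1/2))))) *
        (2 ^ (α + 1/2) * 2 ^ (β - 1/2) / NN) *
        (Real.Gamma (a * (j:ℝ)) * T ^ (-(a * (j:ℝ))))) =
      D ^ 2 * 32 ^ (α + 1/2) / (2 * Real.sqrt Real.pi) *
        (Real.Gamma (a * (j:ℝ)) / Real.Gamma (β + 1/2)) *
        Real.exp (-(x - y) ^ 2 / (8 * ξ)) * ((1 - ξ ^ 2) / ξ) ^ (α + 1) *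
        |x ^ 2 - y ^ 2| ^ (-(2 * α + 1)) * (x * y) ^ (-(a * (j:ℝ))) := by
    rw [← hexp1, hNN]
    have h2β : ((2:ℝ) ^ β) ≠ 0 := (Real.rpow_pos_of_pos two_pos _).ne'
    calc sh ^ (-1 - β) *
        ((Real.exp (-u1) * (D * u1 ^ (-(α + 1/2)) * (D * u2 ^ (-(α + 1/2))))) *
          (2 ^ (α + 1/2) * 2 ^ (β - 1/2) / (2 ^ β * Real.sqrt Real.pi * Real.Gamma (β + 1/2))) *
          (Real.Gamma (a * (j:ℝ)) * T ^ (-(a * (j:ℝ)))))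
        = (D * D) * (u1 ^ (-(α + 1/2)) * u2 ^ (-(α + 1/2))) *
            (2 ^ (α + 1/2) * 2 ^ (β - 1/2)) * (sh ^ (-1 - β) * T ^ (-(a * (j:ℝ)))) *
            Real.exp (-u1) * Real.Gamma (a * (j:ℝ)) /
            (2 ^ β * Real.sqrt Real.pi * Real.Gamma (β + 1/2)) := by ring
    _ = (D * D) * (32 ^ (α + 1/2) * |x ^ 2 - y ^ 2| ^ (-(2 * α + 1))) *
            (2 ^ (α + 1/2) * 2 ^ (β - 1/2)) *
            (2 ^ (-(α + 1)) * ((1 - ξ ^ 2) / ξ) ^ (α + 1) * (x * y) ^ (-(a * (j:ℝ)))) *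
            Real.exp (-u1) * Real.Gamma (a * (j:ℝ)) /
            (2 ^ β * Real.sqrt Real.pi * Real.Gamma (β + 1/2)) := by rw [idA, idB]
    _ = ((2:ℝ) ^ (α + 1/2) * 2 ^ (β - 1/2) * 2 ^ (-(α + 1))) *
            ((D * D) * 32 ^ (α + 1/2)) *
            (|x ^ 2 - y ^ 2| ^ (-(2 * α + 1)) * ((1 - ξ ^ 2) / ξ) ^ (α + 1) *
              (x * y) ^ (-(a * (j:ℝ))) * Real.exp (-u1) * Real.Gamma (a * (j:ℝ))) /
            (2 ^ β * Real.sqrt Real.pi * Real.Gamma (β + 1/2)) := by ring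
    _ = ((2:ℝ) ^ β * (2:ℝ)⁻¹) * ((D * D) * 32 ^ (α + 1/2)) *
            (|x ^ 2 - y ^ 2| ^ (-(2 * α + 1)) * ((1 - ξ ^ 2) / ξ) ^ (α + 1) *
              (x * y) ^ (-(a * (j:ℝ))) * Real.exp (-u1) * Real.Gamma (a * (j:ℝ))) /
            (2 ^ β * Real.sqrt Real.pi * Real.Gamma (β + 1/2)) := by rw [idC]
    _ = (2:ℝ) ^ β * ((2:ℝ)⁻¹ * ((D * D) * 32 ^ (α + 1/2)) *
            (|x ^ 2 - y ^ 2| ^ (-(2 * α + 1)) * ((1 - ξ ^ 2) / ξ) ^ (α + 1) *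
              (x * y) ^ (-(a * (j:ℝ))) * Real.exp (-u1) * Real.Gamma (a * (j:ℝ)))) /
            ((2:ℝ) ^ β * (Real.sqrt Real.pi * Real.Gamma (β + 1/2))) := by ring
    _ = (2:ℝ)⁻¹ * ((D * D) * 32 ^ (α + 1/2)) *
            (|x ^ 2 - y ^ 2| ^ (-(2 * α + 1)) * ((1 - ξ ^ 2) / ξ) ^ (α + 1) *
              (x * y) ^ (-(a * (j:ℝ))) * Real.exp (-u1) * Real.Gamma (a * (j:ℝ))) /
            (Real.sqrt Real.pi * Real.Gamma (β + 1/2)) := mul_div_mul_left _ _ h2β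
    _ = D ^ 2 * 32 ^ (α + 1/2) / (2 * Real.sqrt Real.pi) *
            (Real.Gamma (a * (j:ℝ)) / Real.Gamma (β + 1/2)) *
            Real.exp (-u1) * ((1 - ξ ^ 2) / ξ) ^ (α + 1) *
            |x ^ 2 - y ^ 2| ^ (-(2 * α + 1)) * (x * y) ^ (-(a * (j:ℝ))) := by
        field_simp
  refine le_trans (mul_le_mul_of_nonneg_left (le_trans hIb hgInt)
    (Real.rpow_nonneg hsh.le _)) ?_
  refine le_trans (mul_le_mul_of_nonneg_left
    (mul_le_mul_of_nonneg_right hEEK (mul_nonneg hΓa.le (Real.rpow_nonneg hT0.le _)))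
    (Real.rpow_nonneg hsh.le _)) (le_of_eq hfinal)
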